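/- Let A in R^{n×d} have rows a_1,...,a_n, let x in R^d, k > 0, c_i = sqrt(s_i)·k with s_i = s(a_i), M = Σ_i ||a_i||_2^2 (1 + s_i/c_i), and select row i with probability p_i = (||a_i||_2^2/M)(1 + s_i/c_i), then output G = (1/p_i) G_i where G_i is an independent unbiased estimator of a_i a_i^T x with E[||G_i||_2^2] ≤ ||a_i||_2^2(1+s_i/c_i)((a_i^T x)^2 + (s_i/c_i^2)||a_i||_2^2||x||_2^2). Then E[G] = A^T A x and E[||G||_2^2] ≤ M(||Ax||_2^2 + (1/k^2)||A||_F^2 ||x||_2^2). -/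

import Mathlib

open MeasureTheory ProbabilityTheory Finset

lemma key_int {Ω : Type*} [MeasurableSpace Ω] (μ : Measure Ω) [IsProbabilityMeasure μ]
    {n d : ℕ} {I : Ω → Fin n} (hI : Measurable I) {G : Ω → Fin n → Fin d → ℝ}
    (hindep : IndepFun I G μ) (i : Fin n) (q : ℝ) (hq : 0 ≤ q)
    (hpi : μ {ω | I ω = i} = ENNReal.ofReal q)
    (f : (Fin n → Fin d → ℝ) → ℝ) (hf : Measurable f)
    (hfint : Integrable (fun ω => f (G ω)) μ) :
    Integrable (fun ω => if I ω = i then f (G ω) else 0) μ ∧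
    ∫ ω, (if I ω = i then f (G ω) else 0) ∂μ = q * ∫ ω, f (G ω) ∂μ := by
  have hXY : IndepFun (fun ω => if I ω = i then (1:ℝ) else 0) (fun ω => f (G ω)) μ :=
    hindep.comp (measurable_of_countable (fun m : Fin n => if m = i then (1:ℝ) else 0)) hf
  have hind : (fun ω => if I ω = i then (1:ℝ) else 0)
      = Set.indicator (I ⁻¹' {i}) (fun _ => (1:ℝ)) := by
    ext ω; simp [Set.indicator, Set.mem_preimage]
  have hXint : Integrable (fun ω => if I ω = i then (1:ℝ) else 0) μ := by
    rw [hind]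
    exact (integrable_const (1:ℝ)).indicator (hI (measurableSet_singleton i))
  have heq : (fun ω => if I ω = i then f (G ω) else 0)
      = (fun ω => if I ω = i then (1:ℝ) else 0) * (fun ω => f (G ω)) := by
    ext ω; by_cases h : I ω = i <;> simp [h]
  have hX : ∫ ω, (if I ω = i then (1:ℝ) else 0) ∂μ = q := by
    rw [hind, integral_indicator_const (1:ℝ) (hI (measurableSet_singleton i))]
    have : μ (I ⁻¹' {i}) = ENNReal.ofReal q := hpi
    rw [measureReal_def, this]
    simp [ENNReal.toReal_ofReal hq]
  refine ⟨?_, ?_⟩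
  · rw [heq]; exact hXY.integrable_mul hXint hfint
  · calc ∫ ω, (if I ω = i then f (G ω) else 0) ∂μ
        = integral μ ((fun ω => if I ω = i then (1:ℝ) else 0) * (fun ω => f (G ω))) := by
          rw [← heq]
      _ = (∫ ω, (if I ω = i then (1:ℝ) else 0) ∂μ) * ∫ ω, f (G ω) ∂μ :=
          hXY.integral_mul_eq_mul_integral hXint.aestronglyMeasurable hfint.aestronglyMeasurable
      _ = q * ∫ ω, f (G ω) ∂μ := by rw [hX]

/-- Full matrix sampling estimator of `AᵀAx`: pick row `i` with probability
`p_i = (‖a_i‖₂²/M)(1 + s_i/c_i)` where `c_i = √s_i · k` and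
`M = Σ_i ‖a_i‖₂²(1 + s_i/c_i)`, independently of per-row unbiased estimators `G_i`
of `a_i a_iᵀ x` satisfying the rank-one second-moment bound; output `G = G_i/p_i`.
Then `E[G] = AᵀAx` and `E‖G‖₂² ≤ M(‖Ax‖₂² + (1/k²)‖A‖_F²‖x‖₂²)`. -/
theorem stmt_7 {n d : ℕ} (A : Fin n → Fin d → ℝ) (hrows : ∀ i, A i ≠ 0)
    (x : Fin d → ℝ) (k : ℝ) (hk : 0 < k)
    (s : Fin n → ℝ) (hs : ∀ i, s i = (∑ j, |A i j|) ^ 2 / ∑ j, (A i j) ^ 2)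
    (c : Fin n → ℝ) (hc : ∀ i, c i = Real.sqrt (s i) * k)
    (M : ℝ) (hM : M = ∑ i, (∑ j, (A i j) ^ 2) * (1 + s i / c i))
    (p : Fin n → ℝ) (hp : ∀ i, p i = (∑ j, (A i j) ^ 2) * (1 + s i / c i) / M)
    {Ω : Type*} [MeasurableSpace Ω] (μ : Measure Ω) [IsProbabilityMeasure μ]
    (I : Ω → Fin n) (hImeas : Measurable I)
    (hIdist : ∀ i, μ {ω | I ω = i} = ENNReal.ofReal (p i))
    (G : Ω → Fin n → Fin d → ℝ) (hGmeas : Measurable G)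
    (hindep : IndepFun I G μ)
    (hGint : ∀ i j, Integrable (fun ω => G ω i j) μ)
    (hGint2 : ∀ i, Integrable (fun ω => ∑ j, (G ω i j) ^ 2) μ)
    (hGmean : ∀ i j, ∫ ω, G ω i j ∂μ = A i j * ∑ l, A i l * x l)
    (hGsq : ∀ i, ∫ ω, ∑ j, (G ω i j) ^ 2 ∂μ ≤
      (∑ j, (A i j) ^ 2) * (1 + s i / c i) *
        ((∑ l, A i l * x l) ^ 2 +
          s i / (c i) ^ 2 * (∑ j, (A i j) ^ 2) * ∑ l, (x l) ^ 2)) :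
    (∀ j, ∫ ω, (1 / p (I ω)) * G ω (I ω) j ∂μ = ∑ i, A i j * ∑ l, A i l * x l) ∧
      ∫ ω, ∑ j, ((1 / p (I ω)) * G ω (I ω) j) ^ 2 ∂μ ≤
        M * ((∑ i, (∑ l, A i l * x l) ^ 2) +
          (1 / k ^ 2) * (∑ i, ∑ j, (A i j) ^ 2) * ∑ l, (x l) ^ 2) := by
  -- positivity facts
  have hsq_pos : ∀ i, 0 < ∑ j, (A i j) ^ 2 := by
    intro i
    obtain ⟨j, hj⟩ := Function.ne_iff.mp (hrows i)
    exact Finset.sum_pos' (fun j _ => sq_nonneg _)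
      ⟨j, Finset.mem_univ j, (sq_abs (A i j)) ▸ pow_pos (abs_pos.mpr hj) 2⟩
  have habs_pos : ∀ i, 0 < ∑ j, |A i j| := by
    intro i
    obtain ⟨j, hj⟩ := Function.ne_iff.mp (hrows i)
    exact Finset.sum_pos' (fun j _ => abs_nonneg _) ⟨j, Finset.mem_univ j, abs_pos.mpr hj⟩
  have hs_pos : ∀ i, 0 < s i := fun i => by
    rw [hs i]; exact div_pos (pow_pos (habs_pos i) 2) (hsq_pos i)
  have hc_pos : ∀ i, 0 < c i := fun i => by
    rw [hc i]; exact mul_pos (Real.sqrt_pos.mpr (hs_pos i)) hk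
  have hr_pos : ∀ i, 0 < 1 + s i / c i := fun i =>
    add_pos one_pos (div_pos (hs_pos i) (hc_pos i))
  have hW_pos : ∀ i, 0 < (∑ j, (A i j) ^ 2) * (1 + s i / c i) := fun i =>
    mul_pos (hsq_pos i) (hr_pos i)
  have hΩ : Nonempty Ω := by
    by_contra h
    rw [not_nonempty_iff] at h
    have := measure_univ (μ := μ)
    simp [Set.univ_eq_empty_iff.mpr h] at this
  have hn : Nonempty (Fin n) := ⟨I (Classical.arbitrary Ω)⟩
  have hM_pos : 0 < M := by
    rw [hM]
    exact Finset.sum_pos (fun i _ => hW_pos i) Finset.univ_nonempty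
  have hp_pos : ∀ i, 0 < p i := fun i => by
    rw [hp i]; exact div_pos (hW_pos i) hM_pos
  have hck : ∀ i, s i / (c i) ^ 2 = 1 / k ^ 2 := by
    intro i
    rw [hc i, mul_pow, Real.sq_sqrt (hs_pos i).le]
    rw [div_mul_eq_div_div, div_self (hs_pos i).ne']
  constructor
  · -- unbiasedness
    intro j
    have hrw : ∀ ω, (1 / p (I ω)) * G ω (I ω) j
        = ∑ i, (if I ω = i then (1 / p i) * G ω i j else 0) := by
      intro ω
      rw [Finset.sum_ite_eq]
      simp
    have hkey := fun i => key_int μ hImeas hindep i (p i) (hp_pos i).le (hIdist i)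
      (fun g => (1 / p i) * g i j)
      (by fun_prop)
      ((hGint i j).const_mul _)
    calc ∫ ω, (1 / p (I ω)) * G ω (I ω) j ∂μ
        = ∫ ω, ∑ i, (if I ω = i then (1 / p i) * G ω i j else 0) ∂μ := by
          exact integral_congr_ae (Filter.Eventually.of_forall hrw)
      _ = ∑ i, ∫ ω, (if I ω = i then (1 / p i) * G ω i j else 0) ∂μ :=
          integral_finset_sum _ (fun i _ => (hkey i).1)
      _ = ∑ i, p i * ∫ ω, (1 / p i) * G ω i j ∂μ := by
          exact Finset.sum_congr rfl (fun i _ => (hkey i).2)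
      _ = ∑ i, A i j * ∑ l, A i l * x l := by
          refine Finset.sum_congr rfl (fun i _ => ?_)
          rw [integral_const_mul, hGmean i j]
          field_simp
          rw [mul_assoc]
          exact mul_div_cancel_left₀ _ (hp_pos i).ne'
  · -- second moment
    have hrw : ∀ ω, (∑ j, ((1 / p (I ω)) * G ω (I ω) j) ^ 2)
        = ∑ i, (if I ω = i then (1 / p i) ^ 2 * ∑ j, (G ω i j) ^ 2 else 0) := by
      intro ω
      rw [Finset.sum_ite_eq]
      simp [mul_pow, Finset.mul_sum]
    have hkey := fun i => key_int μ hImeas hindep i (p i) (hp_pos i).le (hIdist i)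
      (fun g => (1 / p i) ^ 2 * ∑ j, (g i j) ^ 2)
      (by fun_prop)
      ((hGint2 i).const_mul _)
    have heq1 : ∫ ω, ∑ j, ((1 / p (I ω)) * G ω (I ω) j) ^ 2 ∂μ
        = ∑ i, p i * ((1 / p i) ^ 2 * ∫ ω, ∑ j, (G ω i j) ^ 2 ∂μ) := by
      calc ∫ ω, ∑ j, ((1 / p (I ω)) * G ω (I ω) j) ^ 2 ∂μ
          = ∫ ω, ∑ i, (if I ω = i then (1 / p i) ^ 2 * ∑ j, (G ω i j) ^ 2 else 0) ∂μ :=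
            integral_congr_ae (Filter.Eventually.of_forall hrw)
        _ = ∑ i, ∫ ω, (if I ω = i then (1 / p i) ^ 2 * ∑ j, (G ω i j) ^ 2 else 0) ∂μ :=
            integral_finset_sum _ (fun i _ => (hkey i).1)
        _ = ∑ i, p i * ∫ ω, (1 / p i) ^ 2 * ∑ j, (G ω i j) ^ 2 ∂μ :=
            Finset.sum_congr rfl (fun i _ => (hkey i).2)
        _ = ∑ i, p i * ((1 / p i) ^ 2 * ∫ ω, ∑ j, (G ω i j) ^ 2 ∂μ) := by
            refine Finset.sum_congr rfl (fun i _ => ?_)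
            rw [integral_const_mul]
    rw [heq1]
    have hterm : ∀ i, p i * ((1 / p i) ^ 2 * ∫ ω, ∑ j, (G ω i j) ^ 2 ∂μ)
        ≤ M * ((∑ l, A i l * x l) ^ 2
            + 1 / k ^ 2 * (∑ j, (A i j) ^ 2) * ∑ l, (x l) ^ 2) := by
      intro i
      have h1 : p i * ((1 / p i) ^ 2 * ∫ ω, ∑ j, (G ω i j) ^ 2 ∂μ)
          = (1 / p i) * ∫ ω, ∑ j, (G ω i j) ^ 2 ∂μ := by
        field_simp
      rw [h1]
      have h2 : (1 / p i) * ∫ ω, ∑ j, (G ω i j) ^ 2 ∂μ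
          ≤ (1 / p i) * ((∑ j, (A i j) ^ 2) * (1 + s i / c i) *
            ((∑ l, A i l * x l) ^ 2 +
              s i / (c i) ^ 2 * (∑ j, (A i j) ^ 2) * ∑ l, (x l) ^ 2)) :=
        mul_le_mul_of_nonneg_left (hGsq i) (one_div_nonneg.mpr (hp_pos i).le)
      refine h2.trans_eq ?_
      rw [hp i, hck i, one_div_div]
      have hWne := (hW_pos i).ne'
      have hcne := (hc_pos i).ne'
      have hkne := hk.ne'
      have hden : (∑ j, (A i j) ^ 2) * c i + (∑ j, (A i j) ^ 2) * s i ≠ 0 :=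
        (add_pos (mul_pos (hsq_pos i) (hc_pos i)) (mul_pos (hsq_pos i) (hs_pos i))).ne'
      field_simp
      linear_combination ((∑ j, (A i j) ^ 2) * ∑ l, (x l) ^ 2 + (∑ l, A i l * x l) ^ 2 * k ^ 2) * mul_inv_cancel₀ hden
    refine (Finset.sum_le_sum (fun i _ => hterm i)).trans_eq ?_
    rw [← Finset.mul_sum, Finset.sum_add_distrib]
    congr 1
    congr 1
    rw [← Finset.sum_mul, ← Finset.mul_sum]
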